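/- Assume f satisfies hypothesis (KPP) with constant Z > 0. Let w be the (nonnegative) classical solution of ∂_t u = Δu + f(t,u) with nonnegative, continuous, compactly supported, not identically zero initial datum w₀, and let u be the classical solution with initial datum u₀(x) = w₀(x) + w₀(x+ξ), where ξ ∈ ℝ^N \ {0}. Fix t > 0, θ ∈ (0,Z), L > 0 and a unit vector η ∈ ℝ^N with η·ξ = 0, and suppose that w(t,x) ≤ θ/2 for all x with |x| ≥ L. Then the upper level set U_θ(t) of u is contained in the slab {x ∈ ℝ^N : |x·η| < L}, and consequently ℛ^i_θ(t) ≤ L. -/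

import Mathlib

open Filter Metric Set
open scoped ENNReal NNReal

/-- The Laplacian of a function on Euclidean space, as the sum of second partial
derivatives in the coordinate directions. -/
noncomputable def laplacian {N : ℕ} (φ : EuclideanSpace ℝ (Fin N) → ℝ)
    (x : EuclideanSpace ℝ (Fin N)) : ℝ :=
  ∑ i : Fin N, fderiv ℝ (fun y => fderiv ℝ φ y (EuclideanSpace.single i (1:ℝ))) x
    (EuclideanSpace.single i (1:ℝ))

/-- Standing assumptions: `f (t, z)` is Hölder continuous in `t`, Lipschitz continuous
in `z` uniformly in `t`, and `f (t, 0) = 0` for all `t > 0`. -/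
def StandingAssumptions (f : ℝ → ℝ → ℝ) : Prop :=
  (∃ a : ℝ, 0 < a ∧ a ≤ 1 ∧ ∃ C : ℝ, ∀ z : ℝ, ∀ t ∈ Set.Ioi (0:ℝ), ∀ s ∈ Set.Ioi (0:ℝ),
    |f t z - f s z| ≤ C * |t - s| ^ a) ∧
  (∃ L : ℝ≥0, ∀ t > (0:ℝ), LipschitzWith L (fun z => f t z)) ∧
  (∀ t > (0:ℝ), f t 0 = 0)

/-- A classical solution of `∂ₜ u = Δu + f(t,u)` on `(0,∞) × ℝᴺ` with initial datum `u₀`: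
continuous on `[0,∞) × ℝᴺ`, bounded on `[0,T] × ℝᴺ` for every `T > 0`, `C¹` in `t` and
`C²` in `x` for `t > 0`, satisfying the equation pointwise for `t > 0`, and `u(0,·) = u₀`. -/
structure IsClassicalSolution {N : ℕ} (f : ℝ → ℝ → ℝ)
    (u : ℝ → EuclideanSpace ℝ (Fin N) → ℝ)
    (u₀ : EuclideanSpace ℝ (Fin N) → ℝ) : Prop where
  cont : ContinuousOn (Function.uncurry u)
    (Set.Ici (0:ℝ) ×ˢ (Set.univ : Set (EuclideanSpace ℝ (Fin N))))
  bounded : ∀ T > (0:ℝ), ∃ C : ℝ, ∀ t ∈ Set.Icc (0:ℝ) T, ∀ x, |u t x| ≤ C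
  time_diff : ∀ x, ∀ t > (0:ℝ), DifferentiableAt ℝ (fun s => u s x) t
  space_smooth : ∀ t > (0:ℝ), ContDiff ℝ 2 (u t)
  eqn : ∀ t > (0:ℝ), ∀ x, deriv (fun s => u s x) t = laplacian (u t) x + f t (u t x)
  init : u 0 = u₀

/-- Invasion property with level `Z ∈ (0, +∞]`: for every compact `K`,
`liminf_{t→∞} min_{x ∈ K} u (t, x) ≥ Z`, i.e. for every real `z` (strictly) below `Z`,
eventually `u (t, ·) ≥ z` on `K`. -/
def Invades {N : ℕ} (u : ℝ → EuclideanSpace ℝ (Fin N) → ℝ) (Z : ℝ≥0∞) : Prop :=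
  ∀ z : ℝ, ENNReal.ofReal z < Z →
    ∀ K : Set (EuclideanSpace ℝ (Fin N)), IsCompact K →
      ∃ t₀ : ℝ, ∀ t ≥ t₀, ∀ x ∈ K, z ≤ u t x

/-- The upper level set `U_θ(t) = {x : u (t, x) > θ}`. -/
def upperLevelSet {N : ℕ} (u : ℝ → EuclideanSpace ℝ (Fin N) → ℝ) (θ t : ℝ) :
    Set (EuclideanSpace ℝ (Fin N)) := {x | θ < u t x}

/-- The inner radius `ℛⁱ_θ(t)`: the supremum of radii of balls contained in the upper
level set `U_θ(t)`. -/
noncomputable def innerRadius {N : ℕ} (u : ℝ → EuclideanSpace ℝ (Fin N) → ℝ)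
    (θ t : ℝ) : ℝ :=
  sSup {r : ℝ | ∃ x₀, ∀ x ∈ Metric.ball x₀ r, θ < u t x}

/-- The outer radius `ℛᵉ_θ(t)`: the infimum of radii of balls containing the upper
level set `U_θ(t)`. -/
noncomputable def outerRadius {N : ℕ} (u : ℝ → EuclideanSpace ℝ (Fin N) → ℝ)
    (θ t : ℝ) : ℝ :=
  sInf {r : ℝ | 0 < r ∧ ∃ x₀, ∀ x ∉ Metric.ball x₀ r, u t x ≤ θ}

/-- The centered inscribed radius `r_θ(t)`: the supremum of radii `r` such that
`u (t, ·) > θ` on the centered ball `B_r(0)` (equal to `0` if no positive `r` works). -/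
noncomputable def centeredRadius {N : ℕ} (u : ℝ → EuclideanSpace ℝ (Fin N) → ℝ)
    (θ t : ℝ) : ℝ :=
  sSup {r : ℝ | ∀ x : EuclideanSpace ℝ (Fin N), ‖x‖ < r → θ < u t x}

/-- Hypothesis (f≥g): `f(t,z) ≥ g(z)` with `g` continuous, `g ≤ 0` on `(0,θ₀)`,
`g > 0` on `(θ₀,Z)` and `∫₀^Z g > 0`. -/
def HypFG (f : ℝ → ℝ → ℝ) (g : ℝ → ℝ) (θ₀ Z : ℝ) : Prop :=
  ContinuousOn g (Set.Ici 0) ∧ (∀ t ≥ (0:ℝ), ∀ z ≥ (0:ℝ), g z ≤ f t z) ∧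
  0 < θ₀ ∧ θ₀ < Z ∧ (∀ z ∈ Set.Ioo 0 θ₀, g z ≤ 0) ∧ (∀ z ∈ Set.Ioo θ₀ Z, 0 < g z) ∧
  0 < ∫ z in (0:ℝ)..Z, g z

/-- Hypothesis (KPP): `inf_{t>0} f(t,z) > 0` for every `z ∈ (0,Z)` and
`z ↦ f(t,z)/z` is nonincreasing on `(0,∞)` for every `t > 0`. -/
def HypKPP (f : ℝ → ℝ → ℝ) (Z : ℝ) : Prop :=
  0 < Z ∧ (∀ z ∈ Set.Ioo 0 Z, ∃ ε > (0:ℝ), ∀ t > (0:ℝ), ε ≤ f t z) ∧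
  (∀ t > (0:ℝ), AntitoneOn (fun z => f t z / z) (Set.Ioi 0))



/-! ### Auxiliary lemmas for the proof -/

open scoped Topology

set_option maxHeartbeats 1000000

/-- If `g` is differentiable at `t > 0` and `g ≤ g t` on `[0,t]`, then `deriv g t ≥ 0`. -/
lemma deriv_nonneg_of_isMaxOn_Icc {g : ℝ → ℝ} {t : ℝ} (ht : 0 < t)
    (hg : DifferentiableAt ℝ g t) (hmax : ∀ s ∈ Set.Icc (0:ℝ) t, g s ≤ g t) :
    0 ≤ deriv g t := by
  have hd := hg.hasDerivAt
  rw [hasDerivAt_iff_tendsto_slope] at hd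
  have hd' : Tendsto (slope g t) (𝓝[<] t) (𝓝 (deriv g t)) :=
    hd.mono_left (nhdsWithin_mono _ (fun s hs => ne_of_lt hs))
  refine ge_of_tendsto hd' ?_
  filter_upwards [Ioo_mem_nhdsLT_of_mem (by constructor <;> [exact ht; rfl] :
    t ∈ Set.Ioc (0:ℝ) t)] with s hs
  have h1 : g s ≤ g t := hmax s ⟨le_of_lt hs.1, le_of_lt hs.2⟩
  have h2 : s - t < 0 := by linarith [hs.2]
  rw [slope_def_field]
  exact div_nonneg_iff.2 (Or.inr ⟨by linarith, le_of_lt h2⟩)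

/-- Second derivative at a local max of a `C²` function is nonpositive. -/
lemma second_deriv_nonpos_of_isLocalMax {g : ℝ → ℝ} (hg : ContDiff ℝ 2 g)
    (hmax : IsLocalMax g 0) : deriv (deriv g) 0 ≤ 0 := by
  by_contra hc
  push_neg at hc
  have h1 : deriv g 0 = 0 := hmax.deriv_eq_zero
  have hdg : ContDiff ℝ 1 (deriv g) := by
    rw [show (2 : WithTop ℕ∞) = 1 + 1 from rfl, contDiff_succ_iff_deriv] at hg
    exact hg.2.2
  have hd : HasDerivAt (deriv g) (deriv (deriv g) 0) 0 :=
    ((hdg.differentiable one_ne_zero) 0).hasDerivAt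
  rw [hasDerivAt_iff_tendsto_slope] at hd
  have hpos : ∀ᶠ s in 𝓝[≠] (0:ℝ), 0 < slope (deriv g) 0 s :=
    hd.eventually (eventually_gt_nhds hc)
  rw [eventually_nhdsWithin_iff, Metric.eventually_nhds_iff] at hpos
  obtain ⟨δ, hδ, hδ'⟩ := hpos
  obtain ⟨δ₂, hδ₂, hδ₂'⟩ := Metric.eventually_nhds_iff.1 hmax
  set r := min δ δ₂ / 2 with hr
  have hr0 : 0 < r := by positivity
  have hmono : StrictMonoOn g (Set.Icc 0 r) := by
    apply strictMonoOn_of_deriv_pos (convex_Icc _ _) (hg.continuous.continuousOn)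
    intro s hs
    rw [interior_Icc] at hs
    have hsd : dist s 0 < δ := by
      rw [Real.dist_eq, sub_zero, abs_of_pos hs.1]
      have : r < δ := by
        rcases le_total δ δ₂ with h | h
        · simp only [hr, min_eq_left h]; linarith
        · simp only [hr, min_eq_right h]; linarith
      linarith [hs.2]
    have := hδ' hsd (ne_of_gt hs.1)
    rw [slope_def_field, h1] at this
    have hq : 0 < deriv g s / s := by
      simpa using this
    have := mul_pos hq hs.1
    rwa [div_mul_cancel₀ _ (ne_of_gt hs.1)] at this
  have hlt : g 0 < g r := hmono (by simp [le_of_lt hr0]) (by simp [le_of_lt hr0]) hr0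
  have hle : g r ≤ g 0 := by
    apply hδ₂'
    rw [Real.dist_eq, sub_zero, abs_of_pos hr0]
    rcases le_total δ δ₂ with h | h
    · simp only [hr, min_eq_left h]; linarith
    · simp only [hr, min_eq_right h]; linarith
  linarith

variable {N : ℕ}
local notation "E" => EuclideanSpace ℝ (Fin N)

/-- At a local max of a `C²` function, every second directional derivative is `≤ 0`. -/
lemma second_dirderiv_nonpos {F : E → ℝ} (hF : ContDiff ℝ 2 F) {x : E}
    (hmax : IsLocalMax F x) (e : E) :
    fderiv ℝ (fun y => fderiv ℝ F y e) x e ≤ 0 := by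
  set line : ℝ → E := fun s => x + s • e with hline_def
  have hline : ContDiff ℝ 2 line := contDiff_const.add (contDiff_id.smul contDiff_const)
  have hlined : ∀ s : ℝ, HasDerivAt line e s := by
    intro s
    simpa [hline_def] using ((hasDerivAt_id s).smul_const e).const_add x
  set g : ℝ → ℝ := fun s => F (line s) with hg_def
  have hg : ContDiff ℝ 2 g := hF.comp hline
  have hline0 : line 0 = x := by simp [hline_def]
  have hgmax : IsLocalMax g 0 := by
    have hc : ContinuousAt line 0 := hline.continuous.continuousAt
    have := hc.eventually (hline0 ▸ hmax)
    filter_upwards [this] with s hs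
    simpa [hg_def, hline0] using hs
  -- first derivative of g
  have hFd : Differentiable ℝ F := hF.differentiable (by norm_num)
  have hderiv1 : ∀ s : ℝ, deriv g s = fderiv ℝ F (line s) e := by
    intro s
    exact (((hFd (line s)).hasFDerivAt).comp_hasDerivAt s (hlined s)).deriv
  -- the directional derivative map is differentiable
  set G : E → ℝ := fun y => fderiv ℝ F y e with hG_def
  have hG : ContDiff ℝ 1 G :=
    (hF.fderiv_right (le_refl _)).clm_apply contDiff_const
  have hderiv2 : deriv (deriv g) 0 = fderiv ℝ G x e := by
    have : deriv g = fun s => G (line s) := funext hderiv1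
    rw [this]
    have := ((((hG.differentiable one_ne_zero) (line 0)).hasFDerivAt).comp_hasDerivAt 0
      (hlined 0)).deriv
    rw [hline0] at this
    exact this
  rw [← hderiv2]
  exact second_deriv_nonpos_of_isLocalMax hg hgmax

/-- The quadratic function. -/
noncomputable def qfun {N : ℕ} (x : EuclideanSpace ℝ (Fin N)) : ℝ := ∑ i, x i ^ 2

lemma qfun_hasFDerivAt (y : E) :
    HasFDerivAt (qfun (N := N))
      (∑ i, (2 * y i) • (EuclideanSpace.proj i : E →L[ℝ] ℝ)) y := by
  have h : ∀ i ∈ Finset.univ, HasFDerivAt (fun y : E => y i ^ 2)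
      ((2 * y i) • (EuclideanSpace.proj i : E →L[ℝ] ℝ)) y := by
    intro i _
    have hp : HasFDerivAt (fun y : E => y i)
        (EuclideanSpace.proj i : E →L[ℝ] ℝ) y :=
      (EuclideanSpace.proj (𝕜 := ℝ) i).hasFDerivAt
    have := hp.fun_mul hp
    have h2 : (fun y : E => y i * y i) = (fun y : E => y i ^ 2) := by
      funext z; ring
    rw [h2] at this
    rw [show (2 * y i) • (EuclideanSpace.proj i : E →L[ℝ] ℝ)
      = y i • EuclideanSpace.proj i + y i • EuclideanSpace.proj i by rw [two_mul, add_smul]]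
    exact this
  exact HasFDerivAt.fun_sum h

lemma qfun_fderiv_apply (y e : E) :
    fderiv ℝ (qfun (N := N)) y e = ∑ i, 2 * y i * e i := by
  rw [(qfun_hasFDerivAt y).fderiv]
  simp [mul_assoc]

lemma qfun_differentiable : Differentiable ℝ (qfun (N := N)) :=
  fun y => (qfun_hasFDerivAt y).differentiableAt

lemma qfun_D2 (x e : E) :
    fderiv ℝ (fun y => fderiv ℝ (qfun (N := N)) y e) x e = ∑ i, 2 * e i * e i := by
  have h1 : (fun y : E => fderiv ℝ (qfun (N := N)) y e)
      = fun y : E => ∑ i, 2 * y i * e i := funext fun y => qfun_fderiv_apply y e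
  rw [h1]
  have h : ∀ i ∈ Finset.univ, HasFDerivAt (fun y : E => 2 * y i * e i)
      ((e i) • ((2:ℝ) • (EuclideanSpace.proj i : E →L[ℝ] ℝ))) x := by
    intro i _
    exact (((EuclideanSpace.proj (𝕜 := ℝ) i).hasFDerivAt).const_mul 2).mul_const (e i)
  rw [(HasFDerivAt.fun_sum h).fderiv]
  simp [mul_comm, mul_assoc]

lemma qfun_laplacian (x : E) : laplacian (qfun (N := N)) x = 2 * N := by
  unfold laplacian
  have : ∀ i : Fin N, fderiv ℝ (fun y => fderiv ℝ (qfun (N := N)) y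
      (EuclideanSpace.single i (1:ℝ))) x (EuclideanSpace.single i (1:ℝ)) = 2 := by
    intro i
    rw [qfun_D2]
    rw [Finset.sum_eq_single i]
    · simp
    · intro j _ hj
      simp [EuclideanSpace.single_apply, hj]
    · simp
  simp [this, mul_comm]

lemma qfun_eq_normsq (x : E) : qfun x = ‖x‖ ^ 2 := by
  rw [EuclideanSpace.norm_eq, Real.sq_sqrt (by positivity)]
  unfold qfun
  congr 1
  funext i
  rw [Real.norm_eq_abs, sq_abs]

lemma qfun_nonneg (x : E) : 0 ≤ qfun x := by rw [qfun_eq_normsq]; positivity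

lemma qfun_contDiff : ContDiff ℝ 2 (qfun (N := N)) := by
  unfold qfun
  apply ContDiff.sum
  intro i _
  exact ((EuclideanSpace.proj (𝕜 := ℝ) i).contDiff).pow 2

/-- Directional derivative maps of a C² function are differentiable. -/
lemma dirderiv_differentiable {F : E → ℝ} (hF : ContDiff ℝ 2 F) (e : E) :
    Differentiable ℝ (fun y => fderiv ℝ F y e) :=
  ((hF.fderiv_right (m := 1) (le_refl _)).clm_apply contDiff_const).differentiable one_ne_zero

/-- Translation invariance of fderiv. -/
lemma fderiv_translate {B : E → ℝ} (hB : Differentiable ℝ B) (ξ : E) (y : E) :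
    fderiv ℝ (fun z => B (z + ξ)) y = fderiv ℝ B (y + ξ) := by
  have h := ((hB (y + ξ)).hasFDerivAt).comp y ((hasFDerivAt_id y).add_const ξ)
  have h' : HasFDerivAt (fun z => B (z + ξ))
      ((fderiv ℝ B (y + ξ)).comp (ContinuousLinearMap.id ℝ _)) y := by
    simpa [Function.comp_def] using h
  rw [h'.fderiv]
  ext v
  simp

lemma laplacian_translate {B : E → ℝ} (hB : ContDiff ℝ 2 B) (ξ : E) (x : E) :
    laplacian (fun z => B (z + ξ)) x = laplacian B (x + ξ) := by
  unfold laplacian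
  apply Finset.sum_congr rfl
  intro i _
  have hBd : Differentiable ℝ B := hB.differentiable (by norm_num)
  have h1 : (fun y : E => fderiv ℝ (fun z => B (z + ξ)) y (EuclideanSpace.single i (1:ℝ)))
      = fun y : E => (fun z => fderiv ℝ B z (EuclideanSpace.single i (1:ℝ))) (y + ξ) := by
    funext y
    rw [fderiv_translate hBd ξ y]
  rw [h1]
  have hG := dirderiv_differentiable hB (EuclideanSpace.single i (1:ℝ))
  have h := ((hG (x + ξ)).hasFDerivAt).comp x ((hasFDerivAt_id x).add_const ξ)
  have h' : HasFDerivAt (fun y : E => (fun z => fderiv ℝ B z (EuclideanSpace.single i (1:ℝ))) (y + ξ))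
      ((fderiv ℝ (fun y => fderiv ℝ B y (EuclideanSpace.single i (1:ℝ))) (x + ξ)).comp
        (ContinuousLinearMap.id ℝ _)) x := by
    simpa [Function.comp_def] using h
  rw [h'.fderiv]
  simp

/-- The main combination: laplacian of `a*(A - B - C) - ε*(c₁ + q + c₂)`. -/
lemma laplacian_combo {A B C : E → ℝ} (hA : ContDiff ℝ 2 A) (hB : ContDiff ℝ 2 B)
    (hC : ContDiff ℝ 2 C) (a ε c₁ c₂ : ℝ) (x : E) :
    laplacian (fun y => a * (A y - B y - C y) - ε * (c₁ + qfun y + c₂)) x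
      = a * (laplacian A x - laplacian B x - laplacian C x) - ε * laplacian qfun x := by
  have hAd := hA.differentiable (by norm_num)
  have hBd := hB.differentiable (by norm_num)
  have hCd := hC.differentiable (by norm_num)
  have hqd := qfun_differentiable (N := N)
  -- first-order identity
  have h1 : ∀ (y e : E), fderiv ℝ (fun y => a * (A y - B y - C y) - ε * (c₁ + qfun y + c₂)) y e
      = a * (fderiv ℝ A y e - fderiv ℝ B y e - fderiv ℝ C y e) - ε * (fderiv ℝ qfun y e) := by
    intro y e
    have HA := (hAd y).hasFDerivAt
    have HB := (hBd y).hasFDerivAt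
    have HC := (hCd y).hasFDerivAt
    have Hq := (hqd y).hasFDerivAt
    have H := (((HA.fun_sub HB).fun_sub HC).const_mul a).fun_sub
      (((Hq.const_add c₁).add_const c₂).const_mul ε)
    rw [H.fderiv]
    simp [mul_sub]
  -- second-order identity per direction
  have h2 : ∀ (e : E),
      fderiv ℝ (fun y => fderiv ℝ (fun y => a * (A y - B y - C y) - ε * (c₁ + qfun y + c₂)) y e) x e
      = a * (fderiv ℝ (fun y => fderiv ℝ A y e) x e - fderiv ℝ (fun y => fderiv ℝ B y e) x e
          - fderiv ℝ (fun y => fderiv ℝ C y e) x e)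
        - ε * fderiv ℝ (fun y => fderiv ℝ qfun y e) x e := by
    intro e
    have hrw : (fun y : E => fderiv ℝ (fun y => a * (A y - B y - C y) - ε * (c₁ + qfun y + c₂)) y e)
        = fun y : E => a * (fderiv ℝ A y e - fderiv ℝ B y e - fderiv ℝ C y e)
          - ε * (fderiv ℝ qfun y e) := funext fun y => h1 y e
    rw [hrw]
    have GA := dirderiv_differentiable hA e
    have GB := dirderiv_differentiable hB e
    have GC := dirderiv_differentiable hC e
    have Gq : Differentiable ℝ (fun y : E => fderiv ℝ (qfun (N := N)) y e) := by
      have : (fun y : E => fderiv ℝ (qfun (N := N)) y e) = fun y => ∑ i, 2 * y i * e i :=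
        funext fun y => qfun_fderiv_apply y e
      rw [this]
      apply Differentiable.fun_sum
      intro i _
      exact (((EuclideanSpace.proj (𝕜 := ℝ) i).differentiable).const_mul 2).mul_const (e i)
    have H := ((((GA x).hasFDerivAt.fun_sub (GB x).hasFDerivAt).fun_sub (GC x).hasFDerivAt).const_mul a).fun_sub
      ((Gq x).hasFDerivAt.const_mul ε)
    have goal := H.fderiv
    calc fderiv ℝ (fun y : E => a * (fderiv ℝ A y e - fderiv ℝ B y e - fderiv ℝ C y e)
          - ε * (fderiv ℝ qfun y e)) x e
        = (a • ((fderiv ℝ (fun y : E => fderiv ℝ A y e) x - fderiv ℝ (fun y : E => fderiv ℝ B y e) x)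
            - fderiv ℝ (fun y : E => fderiv ℝ C y e) x)
          - ε • fderiv ℝ (fun y : E => fderiv ℝ qfun y e) x) e := by rw [goal]
      _ = _ := by simp [mul_sub]
  unfold laplacian
  rw [Finset.sum_congr rfl (fun i _ => h2 (EuclideanSpace.single i (1:ℝ)))]
  rw [Finset.sum_sub_distrib]
  simp only [← Finset.mul_sum, Finset.sum_sub_distrib]

/-- KPP subadditivity. -/
lemma f_subadd {f : ℝ → ℝ → ℝ} {Z : ℝ} (hf : StandingAssumptions f) (hKPP : HypKPP f Z)
    {t : ℝ} (ht : 0 < t) {a b : ℝ} (ha : 0 ≤ a) (hb : 0 ≤ b) :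
    f t (a + b) ≤ f t a + f t b := by
  rcases eq_or_lt_of_le ha with h0 | ha'
  · rw [← h0, zero_add, hf.2.2 t ht]; linarith
  rcases eq_or_lt_of_le hb with h0 | hb'
  · rw [← h0, add_zero, hf.2.2 t ht]; linarith
  have hanti := hKPP.2.2 t ht
  have hs : (0:ℝ) < a + b := by linarith
  have h1 : f t (a + b) / (a + b) ≤ f t a / a :=
    hanti (mem_Ioi.2 ha') (mem_Ioi.2 hs) (by linarith)
  have h2 : f t (a + b) / (a + b) ≤ f t b / b :=
    hanti (mem_Ioi.2 hb') (mem_Ioi.2 hs) (by linarith)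
  have key : f t (a + b) = a * (f t (a + b) / (a + b)) + b * (f t (a + b) / (a + b)) := by
    field_simp
  rw [key]
  have ha1 : a * (f t (a + b) / (a + b)) ≤ a * (f t a / a) :=
    mul_le_mul_of_nonneg_left h1 ha
  have hb1 : b * (f t (a + b) / (a + b)) ≤ b * (f t b / b) :=
    mul_le_mul_of_nonneg_left h2 hb
  rw [mul_div_cancel₀ _ (ne_of_gt ha')] at ha1
  rw [mul_div_cancel₀ _ (ne_of_gt hb')] at hb1
  linarith

/-- The comparison principle: `u ≤ w(·) + w(·+ξ)`. -/
lemma comparison {f : ℝ → ℝ → ℝ} (hf : StandingAssumptions f)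
    {Z : ℝ} (hKPP : HypKPP f Z)
    {w₀ : E → ℝ} {ξ : E}
    {w : ℝ → E → ℝ} (hw : IsClassicalSolution f w w₀)
    (hwnn : ∀ s ≥ (0:ℝ), ∀ x, 0 ≤ w s x)
    {u : ℝ → E → ℝ}
    (hu : IsClassicalSolution f u (fun x => w₀ x + w₀ (x + ξ))) :
    ∀ t₀ ≥ (0:ℝ), ∀ x₀, u t₀ x₀ ≤ w t₀ x₀ + w t₀ (x₀ + ξ) := by
  intro t₀ ht₀ x₀
  by_contra hcon
  push_neg at hcon
  rcases eq_or_lt_of_le ht₀ with h0 | ht₀'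
  · rw [← h0, hu.init, hw.init] at hcon
    exact absurd hcon (lt_irrefl _)
  clear ht₀
  obtain ⟨K, hK⟩ := hf.2.1
  obtain ⟨α, hα_def, hαpos⟩ : ∃ α : ℝ, α = (K:ℝ) + 1 ∧ 0 < α := ⟨_, rfl, by positivity⟩
  -- bound on φ
  obtain ⟨Cu, hCu⟩ := hu.bounded t₀ ht₀'
  obtain ⟨Cw, hCw⟩ := hw.bounded t₀ ht₀'
  obtain ⟨M, hM_def⟩ : ∃ M : ℝ, M = Cu + Cw + Cw := ⟨_, rfl⟩
  have hMb : ∀ s ∈ Set.Icc (0:ℝ) t₀, ∀ x : E, u s x - w s x - w s (x + ξ) ≤ M := by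
    intro s hs x
    have h1 := hCu s hs x
    have h2 := hCw s hs x
    have h3 := hCw s hs (x + ξ)
    rw [abs_le] at h1 h2 h3
    rw [hM_def]; linarith [h1.2, h2.1, h3.1]
  have hCunn : 0 ≤ Cu := le_trans (abs_nonneg _) (hCu t₀ ⟨le_of_lt ht₀', le_refl _⟩ x₀)
  have hCwnn : 0 ≤ Cw := le_trans (abs_nonneg _) (hCw t₀ ⟨le_of_lt ht₀', le_refl _⟩ x₀)
  have hMnn : 0 ≤ M := by rw [hM_def]; linarith
  obtain ⟨φ₀, hφ₀_def⟩ : ∃ c : ℝ, c = u t₀ x₀ - w t₀ x₀ - w t₀ (x₀ + ξ) := ⟨_, rfl⟩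
  have hφ₀pos : 0 < φ₀ := by rw [hφ₀_def]; linarith
  obtain ⟨D₀, hD₀_def⟩ : ∃ c : ℝ, c = 1 + qfun x₀ + 2 * N * t₀ := ⟨_, rfl⟩
  have hD₀pos : 0 < D₀ := by
    rw [hD₀_def]
    have h1 := qfun_nonneg x₀
    have h2 : (0:ℝ) ≤ 2 * N * t₀ := mul_nonneg (by positivity) (le_of_lt ht₀')
    linarith
  obtain ⟨ε, hεpos, hεsmall⟩ : ∃ ε : ℝ, 0 < ε ∧ ε * D₀ < Real.exp (-(α * t₀)) * φ₀ := by
    refine ⟨Real.exp (-(α * t₀)) * φ₀ / (2 * D₀), by positivity, ?_⟩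
    rw [div_mul_eq_mul_div, mul_comm (2:ℝ) D₀, ← div_div,
      mul_div_assoc, div_self (ne_of_gt hD₀pos), mul_one]
    have h1 : 0 < Real.exp (-(α * t₀)) * φ₀ := by positivity
    linarith [half_lt_self h1]
  -- the function ψ
  obtain ⟨ψ, hψ_def⟩ : ∃ ψ : ℝ → E → ℝ, ∀ s x, ψ s x =
      Real.exp (-(α * s)) * (u s x - w s x - w s (x + ξ)) - ε * (1 + qfun x + 2 * N * s) :=
    ⟨_, fun s x => rfl⟩
  have hψ₀ : 0 < ψ t₀ x₀ := by
    rw [hψ_def, ← hφ₀_def, ← hD₀_def]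
    linarith
  -- continuity of ψ on [0,∞) × ℝ^N
  have hψcont : ContinuousOn (fun p : ℝ × E => ψ p.1 p.2)
      (Set.Ici (0:ℝ) ×ˢ (Set.univ : Set E)) := by
    have hwtr : ContinuousOn (fun p : ℝ × E => w p.1 (p.2 + ξ))
        (Set.Ici (0:ℝ) ×ˢ (Set.univ : Set E)) := by
      have hmap : Continuous (fun p : ℝ × E => (p.1, p.2 + ξ)) :=
        continuous_fst.prodMk (continuous_snd.add continuous_const)
      refine (hw.cont.comp hmap.continuousOn ?_)
      intro p hp
      exact ⟨hp.1, trivial⟩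
    have h1 : ContinuousOn (fun p : ℝ × E => u p.1 p.2)
        (Set.Ici (0:ℝ) ×ˢ (Set.univ : Set E)) := hu.cont
    have h2 : ContinuousOn (fun p : ℝ × E => w p.1 p.2)
        (Set.Ici (0:ℝ) ×ˢ (Set.univ : Set E)) := hw.cont
    have hexp : Continuous (fun p : ℝ × E => Real.exp (-(α * p.1))) :=
      Real.continuous_exp.comp ((continuous_const.mul continuous_fst).neg)
    have hqc : Continuous (qfun (N := N)) := qfun_contDiff.continuous
    have hq : Continuous (fun p : ℝ × E => ε * (1 + qfun p.2 + 2 * N * p.1)) :=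
      continuous_const.mul (((continuous_const.add (hqc.comp continuous_snd)).add
        ((continuous_const.mul continuous_fst))))
    have := (hexp.continuousOn.mul ((h1.sub h2).sub hwtr)).sub hq.continuousOn
    refine this.congr ?_
    intro p _
    exact hψ_def p.1 p.2
  -- radius for coercivity
  obtain ⟨R, hRx₀, hR2⟩ : ∃ R : ℝ, ‖x₀‖ ≤ R ∧ M < ε * R ^ 2 := by
    refine ⟨max ‖x₀‖ (Real.sqrt (M / ε) + 1), le_max_left _ _, ?_⟩
    have h1 : Real.sqrt (M / ε) + 1 ≤ max ‖x₀‖ (Real.sqrt (M / ε) + 1) := le_max_right _ _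
    have h2 : Real.sqrt (M / ε) ^ 2 = M / ε := Real.sq_sqrt (by positivity)
    have h3 : (0:ℝ) ≤ Real.sqrt (M / ε) := Real.sqrt_nonneg _
    have h4 : M / ε < (max ‖x₀‖ (Real.sqrt (M / ε) + 1)) ^ 2 := by
      nlinarith
    rwa [div_lt_iff₀ hεpos, mul_comm] at h4
  have hRnn : 0 ≤ R := le_trans (norm_nonneg _) hRx₀
  -- coercivity: ψ ≤ 0 far away
  have hcoer : ∀ s ∈ Set.Icc (0:ℝ) t₀, ∀ x : E, R < ‖x‖ → ψ s x ≤ 0 := by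
    intro s hs x hx
    have hq : M < ε * qfun x := by
      rw [qfun_eq_normsq]
      have h5 : ε * R ^ 2 ≤ ε * ‖x‖ ^ 2 := by
        apply mul_le_mul_of_nonneg_left _ (le_of_lt hεpos)
        apply pow_le_pow_left₀ hRnn (le_of_lt hx)
      linarith
    have hexp1 : Real.exp (-(α * s)) ≤ 1 := by
      rw [Real.exp_le_one_iff]
      have h6 : (0:ℝ) ≤ α * s := mul_nonneg (le_of_lt hαpos) hs.1
      linarith
    have hφle : u s x - w s x - w s (x + ξ) ≤ M := hMb s hs x
    have hterm : Real.exp (-(α * s)) * (u s x - w s x - w s (x + ξ)) ≤ M := by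
      rcases le_or_gt (u s x - w s x - w s (x + ξ)) 0 with h | h
      · have := Real.exp_pos (-(α * s))
        nlinarith
      · nlinarith [Real.exp_pos (-(α * s))]
    have hrest : ε * qfun x ≤ ε * (1 + qfun x + 2 * N * s) := by
      have h7 : (0:ℝ) ≤ 2 * N * s := mul_nonneg (by positivity) hs.1
      nlinarith
    rw [hψ_def]
    linarith
  -- attain the maximum on a compact set
  have hKcomp : IsCompact (Set.Icc (0:ℝ) t₀ ×ˢ Metric.closedBall (0:E) R) :=
    isCompact_Icc.prod (isCompact_closedBall _ _)
  have hx₀K : (t₀, x₀) ∈ Set.Icc (0:ℝ) t₀ ×ˢ Metric.closedBall (0:E) R :=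
    ⟨⟨le_of_lt ht₀', le_refl _⟩, by rwa [Metric.mem_closedBall, dist_zero_right]⟩
  have hKS : Set.Icc (0:ℝ) t₀ ×ˢ Metric.closedBall (0:E) R
      ⊆ Set.Ici (0:ℝ) ×ˢ (Set.univ : Set E) := by
    rintro ⟨s, x⟩ ⟨hs, _⟩
    exact ⟨hs.1, trivial⟩
  obtain ⟨p, hpK, hpmax'⟩ := hKcomp.exists_isMaxOn ⟨(t₀, x₀), hx₀K⟩ (hψcont.mono hKS)
  have hpmax := isMaxOn_iff.1 hpmax'
  have hψp : 0 < ψ p.1 p.2 := lt_of_lt_of_le hψ₀ (hpmax (t₀, x₀) hx₀K)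
  -- global maximality
  have hglobal : ∀ s ∈ Set.Icc (0:ℝ) t₀, ∀ x : E, ψ s x ≤ ψ p.1 p.2 := by
    intro s hs x
    rcases le_or_gt ‖x‖ R with h | h
    · exact hpmax (s, x) ⟨hs, by rwa [Metric.mem_closedBall, dist_zero_right]⟩
    · exact le_trans (hcoer s hs x h) (le_of_lt hψp)
  have hpT : p.1 ∈ Set.Icc (0:ℝ) t₀ := hpK.1
  -- the max time is positive
  have htstar : 0 < p.1 := by
    rcases eq_or_lt_of_le hpT.1 with h0 | h0
    · exfalso
      have hz : u 0 p.2 - w 0 p.2 - w 0 (p.2 + ξ) = 0 := by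
        rw [hu.init, hw.init]; ring
      have hinit : ψ p.1 p.2 ≤ 0 := by
        rw [← h0, hψ_def, hz]
        have h8 := qfun_nonneg p.2
        nlinarith
      linarith
    · exact h0
  -- time derivative at the max point
  have htT : p.1 ≤ t₀ := hpT.2
  have hU := (hu.time_diff p.2 p.1 htstar).hasDerivAt
  rw [hu.eqn p.1 htstar p.2] at hU
  have hW1 := (hw.time_diff p.2 p.1 htstar).hasDerivAt
  rw [hw.eqn p.1 htstar p.2] at hW1
  have hW2 := (hw.time_diff (p.2 + ξ) p.1 htstar).hasDerivAt
  rw [hw.eqn p.1 htstar (p.2 + ξ)] at hW2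
  have hexp : HasDerivAt (fun s : ℝ => Real.exp (-(α * s)))
      (Real.exp (-(α * p.1)) * (-α)) p.1 := by
    have h1 : HasDerivAt (fun s : ℝ => -(α * s)) (-α) p.1 := by
      have := ((hasDerivAt_id' p.1).const_mul α).neg; rwa [mul_one] at this
    simpa [Function.comp_def] using (Real.hasDerivAt_exp (-(α * p.1))).comp p.1 h1
  have hlin : HasDerivAt (fun s : ℝ => ε * (1 + qfun p.2 + 2 * N * s)) (ε * (2 * N)) p.1 := by
    have h1 : HasDerivAt (fun s : ℝ => 2 * (N:ℝ) * s) (2 * N) p.1 := by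
      simpa using (hasDerivAt_id p.1).const_mul (2 * (N:ℝ))
    exact (h1.const_add (1 + qfun p.2)).const_mul ε
  have hφd := (hU.sub hW1).sub hW2
  have hfun : (fun s => ψ s p.2) = fun s =>
      Real.exp (-(α * s)) * (u s p.2 - w s p.2 - w s (p.2 + ξ))
        - ε * (1 + qfun p.2 + 2 * N * s) := funext fun s => hψ_def s p.2
  have hg : HasDerivAt (fun s => ψ s p.2)
      (Real.exp (-(α * p.1)) * (-α) * (u p.1 p.2 - w p.1 p.2 - w p.1 (p.2 + ξ))
        + Real.exp (-(α * p.1)) *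
          ((laplacian (u p.1) p.2 + f p.1 (u p.1 p.2))
            - (laplacian (w p.1) p.2 + f p.1 (w p.1 p.2))
            - (laplacian (w p.1) (p.2 + ξ) + f p.1 (w p.1 (p.2 + ξ))))
        - ε * (2 * N)) p.1 := by
    rw [hfun]
    exact (hexp.mul hφd).sub hlin
  have hd0 : 0 ≤ Real.exp (-(α * p.1)) * (-α) * (u p.1 p.2 - w p.1 p.2 - w p.1 (p.2 + ξ))
        + Real.exp (-(α * p.1)) *
          ((laplacian (u p.1) p.2 + f p.1 (u p.1 p.2))
            - (laplacian (w p.1) p.2 + f p.1 (w p.1 p.2))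
            - (laplacian (w p.1) (p.2 + ξ) + f p.1 (w p.1 (p.2 + ξ))))
        - ε * (2 * N) := by
    have hmaxt : ∀ s ∈ Set.Icc (0:ℝ) p.1, (fun s => ψ s p.2) s ≤ (fun s => ψ s p.2) p.1 := by
      intro s hs
      exact hglobal s ⟨hs.1, le_trans hs.2 htT⟩ p.2
    have := deriv_nonneg_of_isMaxOn_Icc htstar hg.differentiableAt hmaxt
    rwa [hg.deriv] at this
  -- space: the laplacian at the max point is nonpositive
  have hA := hu.space_smooth p.1 htstar
  have hB := hw.space_smooth p.1 htstar
  have hC : ContDiff ℝ 2 (fun y : E => w p.1 (y + ξ)) :=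
    hB.comp (contDiff_id.add contDiff_const)
  have hψx : ContDiff ℝ 2 (fun y : E =>
      Real.exp (-(α * p.1)) * (u p.1 y - w p.1 y - w p.1 (y + ξ))
        - ε * (1 + qfun y + 2 * N * p.1)) :=
    (contDiff_const.mul ((hA.sub hB).sub hC)).sub
      (contDiff_const.mul ((contDiff_const.add qfun_contDiff).add contDiff_const))
  have hmaxx : IsLocalMax (fun y : E =>
      Real.exp (-(α * p.1)) * (u p.1 y - w p.1 y - w p.1 (y + ξ))
        - ε * (1 + qfun y + 2 * N * p.1)) p.2 := by
    apply Filter.Eventually.of_forall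
    intro y
    have h14 := hglobal p.1 ⟨le_of_lt htstar, htT⟩ y
    rw [hψ_def, hψ_def] at h14
    exact h14
  have hlap : laplacian (fun y : E =>
      Real.exp (-(α * p.1)) * (u p.1 y - w p.1 y - w p.1 (y + ξ))
        - ε * (1 + qfun y + 2 * N * p.1)) p.2 ≤ 0 := by
    unfold laplacian
    apply Finset.sum_nonpos
    intro i _
    exact second_dirderiv_nonpos hψx hmaxx _
  have hcombo := laplacian_combo hA hB hC (Real.exp (-(α * p.1))) ε 1 (2 * N * p.1) p.2
  rw [laplacian_translate hB ξ p.2, qfun_laplacian p.2] at hcombo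
  rw [hcombo] at hlap
  -- positivity of φ at the max point
  have hQpos : 0 < 1 + qfun p.2 + 2 * N * p.1 := by
    have h15 := qfun_nonneg p.2
    have h16 : (0:ℝ) ≤ 2 * N * p.1 := mul_nonneg (by positivity) (le_of_lt htstar)
    linarith
  have hφstar : 0 < u p.1 p.2 - w p.1 p.2 - w p.1 (p.2 + ξ) := by
    have h9 := hψp
    rw [hψ_def] at h9
    have h10 : 0 < ε * (1 + qfun p.2 + 2 * N * p.1) := mul_pos hεpos hQpos
    nlinarith [Real.exp_pos (-(α * p.1))]
  -- the reaction terms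
  have hsub : f p.1 (w p.1 p.2 + w p.1 (p.2 + ξ))
      ≤ f p.1 (w p.1 p.2) + f p.1 (w p.1 (p.2 + ξ)) :=
    f_subadd hf hKPP htstar (hwnn p.1 (le_of_lt htstar) p.2)
      (hwnn p.1 (le_of_lt htstar) (p.2 + ξ))
  have hlip : f p.1 (u p.1 p.2) - f p.1 (w p.1 p.2 + w p.1 (p.2 + ξ))
      ≤ (K:ℝ) * (u p.1 p.2 - w p.1 p.2 - w p.1 (p.2 + ξ)) := by
    have h := (hK p.1 htstar).dist_le_mul (u p.1 p.2) (w p.1 p.2 + w p.1 (p.2 + ξ))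
    rw [Real.dist_eq, Real.dist_eq] at h
    have h2 := le_trans (le_abs_self _) h
    have h3 : |u p.1 p.2 - (w p.1 p.2 + w p.1 (p.2 + ξ))|
        = u p.1 p.2 - w p.1 p.2 - w p.1 (p.2 + ξ) := by
      rw [abs_of_pos (by linarith)]; ring
    rw [h3] at h2
    exact h2
  -- final contradiction
  have hepos := Real.exp_pos (-(α * p.1))
  have h11 : f p.1 (u p.1 p.2) - f p.1 (w p.1 p.2) - f p.1 (w p.1 (p.2 + ξ))
      ≤ (K:ℝ) * (u p.1 p.2 - w p.1 p.2 - w p.1 (p.2 + ξ)) := by linarith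
  have h12 : -α * (u p.1 p.2 - w p.1 p.2 - w p.1 (p.2 + ξ))
      + (f p.1 (u p.1 p.2) - f p.1 (w p.1 p.2) - f p.1 (w p.1 (p.2 + ξ)))
      ≤ -(u p.1 p.2 - w p.1 p.2 - w p.1 (p.2 + ξ)) := by
    have hr : -α * (u p.1 p.2 - w p.1 p.2 - w p.1 (p.2 + ξ))
        + (K:ℝ) * (u p.1 p.2 - w p.1 p.2 - w p.1 (p.2 + ξ))
        = -(u p.1 p.2 - w p.1 p.2 - w p.1 (p.2 + ξ)) := by
      rw [hα_def]; ring
    linarith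
  have h13 : Real.exp (-(α * p.1)) * (-α * (u p.1 p.2 - w p.1 p.2 - w p.1 (p.2 + ξ))
      + (f p.1 (u p.1 p.2) - f p.1 (w p.1 p.2) - f p.1 (w p.1 (p.2 + ξ))))
      ≤ Real.exp (-(α * p.1)) * (-(u p.1 p.2 - w p.1 p.2 - w p.1 (p.2 + ξ))) :=
    mul_le_mul_of_nonneg_left h12 (le_of_lt hepos)
  have h14 : Real.exp (-(α * p.1)) * (-(u p.1 p.2 - w p.1 p.2 - w p.1 (p.2 + ξ))) < 0 :=
    mul_neg_of_pos_of_neg hepos (by linarith)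
  have heq : Real.exp (-(α * p.1)) * (-α) * (u p.1 p.2 - w p.1 p.2 - w p.1 (p.2 + ξ))
        + Real.exp (-(α * p.1)) *
          ((laplacian (u p.1) p.2 + f p.1 (u p.1 p.2))
            - (laplacian (w p.1) p.2 + f p.1 (w p.1 p.2))
            - (laplacian (w p.1) (p.2 + ξ) + f p.1 (w p.1 (p.2 + ξ))))
        - ε * (2 * N)
      = (Real.exp (-(α * p.1)) * (laplacian (u p.1) p.2 - laplacian (w p.1) p.2
          - laplacian (w p.1) (p.2 + ξ)) - ε * (2 * N))
        + Real.exp (-(α * p.1)) * (-α * (u p.1 p.2 - w p.1 p.2 - w p.1 (p.2 + ξ))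
          + (f p.1 (u p.1 p.2) - f p.1 (w p.1 p.2) - f p.1 (w p.1 (p.2 + ξ)))) := by
    ring
  rw [heq] at hd0
  linarith

/-- Under the KPP hypothesis, let `w` be the solution with datum `w₀` and
`u` the solution with datum `w₀(x) + w₀(x+ξ)`.  If `η` is a unit vector orthogonal to
`ξ` and `w(t,·) ≤ θ/2` outside the centered ball of radius `L`, then the upper level set
`U_θ(t)` of `u` lies in the slab `{|x·η| < L}` and hence `ℛⁱ_θ(t) ≤ L`. -/
theorem upperLevelSet_in_slab_orthogonal_direction
    {N : ℕ} (hN : 2 ≤ N) (f : ℝ → ℝ → ℝ) (hf : StandingAssumptions f)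
    (Z : ℝ) (hKPP : HypKPP f Z)
    (w₀ : EuclideanSpace ℝ (Fin N) → ℝ)
    (hw₀nn : ∀ x, 0 ≤ w₀ x) (hw₀cont : Continuous w₀)
    (hw₀supp : HasCompactSupport w₀) (hw₀ne : w₀ ≠ 0)
    (ξ : EuclideanSpace ℝ (Fin N)) (hξ : ξ ≠ 0)
    (w : ℝ → EuclideanSpace ℝ (Fin N) → ℝ) (hw : IsClassicalSolution f w w₀)
    (hwnn : ∀ s ≥ (0:ℝ), ∀ x, 0 ≤ w s x)
    (u : ℝ → EuclideanSpace ℝ (Fin N) → ℝ)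
    (hu : IsClassicalSolution f u (fun x => w₀ x + w₀ (x + ξ)))
    (t θ L : ℝ) (ht : 0 < t) (hθ : 0 < θ) (hθZ : θ < Z) (hL : 0 < L)
    (η : EuclideanSpace ℝ (Fin N)) (hη : ‖η‖ = 1) (hηξ : inner ℝ η ξ = 0)
    (hwt : ∀ x : EuclideanSpace ℝ (Fin N), L ≤ ‖x‖ → w t x ≤ θ / 2) :
    upperLevelSet u θ t ⊆ {x : EuclideanSpace ℝ (Fin N) | |inner ℝ x η| < L} ∧
    innerRadius u θ t ≤ L := by
  
  have key : ∀ x : EuclideanSpace ℝ (Fin N), u t x ≤ w t x + w t (x + ξ) :=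
    fun x => comparison hf hKPP hw hwnn hu t (le_of_lt ht) x
  have hslab : upperLevelSet u θ t ⊆ {x : EuclideanSpace ℝ (Fin N) | |(inner ℝ x η : ℝ)| < L} := by
    intro x hx
    simp only [upperLevelSet, Set.mem_setOf_eq] at hx ⊢
    by_contra hcon
    push_neg at hcon
    have hxn : L ≤ ‖x‖ := by
      have h1 : |(inner ℝ x η : ℝ)| ≤ ‖x‖ * ‖η‖ := abs_real_inner_le_norm x η
      rw [hη, mul_one] at h1
      linarith
    have hinner : (inner ℝ (x + ξ) η : ℝ) = (inner ℝ x η : ℝ) := by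
      rw [inner_add_left]
      rw [real_inner_comm η ξ, hηξ, add_zero]
    have hxξn : L ≤ ‖x + ξ‖ := by
      have h1 : |(inner ℝ (x + ξ) η : ℝ)| ≤ ‖x + ξ‖ * ‖η‖ := abs_real_inner_le_norm _ η
      rw [hη, mul_one, hinner] at h1
      linarith
    have := key x
    have h2 := hwt x hxn
    have h3 := hwt (x + ξ) hxξn
    linarith
  refine ⟨hslab, ?_⟩
  apply Real.sSup_le _ (le_of_lt hL)
  rintro r ⟨x₀, hball⟩
  by_contra hcon
  push_neg at hcon
  have hrL : L < r := hcon
  rcases le_or_gt L |(inner ℝ x₀ η : ℝ)| with hc | hc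
  · have hx₀mem : x₀ ∈ Metric.ball x₀ r := Metric.mem_ball_self (by linarith)
    have : |(inner ℝ x₀ η : ℝ)| < L := hslab (hball x₀ hx₀mem)
    linarith
  · set c : ℝ := (inner ℝ x₀ η : ℝ) with hc_def
    set s : ℝ := if 0 ≤ c then L - c else -L - c with hs_def
    have habs : |c| < L := hc
    rw [abs_lt] at habs
    have hsabs : |s| ≤ L := by
      rw [hs_def]
      split_ifs with h
      · rw [abs_of_pos (by linarith)]; linarith
      · rw [abs_of_neg (by linarith)]; linarith
    have hxmem : x₀ + s • η ∈ Metric.ball x₀ r := by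
      rw [Metric.mem_ball, dist_eq_norm]
      have : x₀ + s • η - x₀ = s • η := by abel
      rw [this, norm_smul, Real.norm_eq_abs, hη, mul_one]
      linarith
    have hin : |(inner ℝ (x₀ + s • η) η : ℝ)| < L := hslab (hball _ hxmem)
    have hcomp : (inner ℝ (x₀ + s • η) η : ℝ) = c + s := by
      rw [inner_add_left, real_inner_smul_left, real_inner_self_eq_norm_mul_norm, hη]
      ring
    rw [hcomp, hs_def] at hin
    split_ifs at hin with h
    · rw [show c + (L - c) = L by ring, abs_of_pos hL] at hin
      linarith
    · rw [show c + (-L - c) = -L by ring, abs_neg, abs_of_pos hL] at hin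
      linarith
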